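/- (1) For k ∈ {1, 2} and ordinals 0 < α < β: if for all α' < α and β' < β there exist α'' with α' < α'' ≤ α and β'' with β' < β'' ≤ β such that α'' ≤_k β'', then α ≤_k β. (2) For every ordinal α, the class {β : α ≤₁ β} is a topologically closed interval of ordinals. (3) For every ordinal α, the class {β : α ≤₂ β} is topologically closed. (4) For every ordinal β and k = 1, 2, the set {α : α ≤_k β} is topologically closed. -/

import Mathlib

open Ordinal Set

/-- `ρ` is additively indecomposable: nonzero and closed under addition. -/
def AddIndec (ρ : Ordinal) : Prop :=
  ρ ≠ 0 ∧ ∀ ξ < ρ, ∀ η < ρ, ξ + η < ρ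

/-- `σ` is divisible by `ρ`, i.e. of the form `ρ·ζ`. -/
def DivBy (ρ σ : Ordinal) : Prop := ∃ ζ : Ordinal, σ = ρ * ζ

/-- The function `f_ξ` of the structure `R^ρ`. -/
noncomputable def fApp (ρ ξ α : Ordinal) : Ordinal :=
  if α % ρ = 0 then α + ξ else ρ * (α / ρ)

/-- A set of ordinals is closed (with respect to `R^ρ`). -/
def RClosed (ρ : Ordinal) (X : Set Ordinal) : Prop :=
  ∀ σ ξ : Ordinal, DivBy ρ σ → ξ < ρ → σ + ξ ∈ X → σ ∈ X

/-- `h` is an embedding of `X` (as a substructure of `R^ρ`) into `R^ρ`. -/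
def IsEmbed (ρ : Ordinal) (X : Set Ordinal) (h : Ordinal → Ordinal) : Prop :=
  (∀ α ∈ X, ∀ β ∈ X, α < β → h α < h β) ∧
  (∀ α ∈ X, ∀ β ∈ X, ∀ ξ, ξ < ρ → (fApp ρ ξ α = β ↔ fApp ρ ξ (h α) = h β))

/-- `Y` is a covering of `Z` (relative to relations `le1`, `le2`). -/
def IsCovering (ρ : Ordinal) (le1 le2 : Ordinal → Ordinal → Prop)
    (Z Y : Set Ordinal) : Prop :=
  ∃ h : Ordinal → Ordinal, IsEmbed ρ Z h ∧
    (∀ σ ∈ Z, ∀ τ ∈ Z, (le1 σ τ → le1 (h σ) (h τ)) ∧ (le2 σ τ → le2 (h σ) (h τ))) ∧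
    h '' Z = Y

/-- The `i`-th element of a finite set of ordinals, in increasing order. -/
noncomputable def nth (Y : Finset Ordinal) (i : ℕ) : Ordinal :=
  (Y.sort (· ≤ ·)).getD i 0

/-- There are cofinally many finite sets `Yv` below `α` with property `P`. -/
def Cofinally (α : Ordinal) (P : Finset Ordinal → Prop) : Prop :=
  ∀ α' < α, ∃ Yt : Finset Ordinal, (∀ y ∈ Yt, α' < y ∧ y < α) ∧ P Yt

/-- The defining condition for `α ≤₁ β`. -/
def Le1Def (ρ : Ordinal) (le1 le2 : Ordinal → Ordinal → Prop) (α β : Ordinal) : Prop :=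
  α ≤ β ∧
  ∀ X Y : Finset Ordinal, (∀ x ∈ X, x < α) → (∀ y ∈ Y, α ≤ y ∧ y < β) →
    RClosed ρ (↑(X ∪ Y) : Set Ordinal) →
    ∃ Yt : Finset Ordinal, (∀ y ∈ Yt, y < α) ∧ (∀ x ∈ X, ∀ y ∈ Yt, x < y) ∧
      IsCovering ρ le1 le2 (↑(X ∪ Y) : Set Ordinal) (↑(X ∪ Yt) : Set Ordinal)

/-- The defining condition for `α ≤₂ β`. -/
def Le2Def (ρ : Ordinal) (le1 le2 : Ordinal → Ordinal → Prop) (α β : Ordinal) : Prop :=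
  α ≤ β ∧
  (∀ X Y : Finset Ordinal, (∀ x ∈ X, x < α) → (∀ y ∈ Y, y < α) →
    RClosed ρ (↑X : Set Ordinal) → RClosed ρ (↑Y : Set Ordinal) →
    (∀ x ∈ X, ∀ y ∈ Y, x < y) →
    Cofinally α (fun Yt => IsCovering ρ le1 le2 (↑(X ∪ Y) : Set Ordinal) (↑(X ∪ Yt) : Set Ordinal)) →
    Cofinally β (fun Yt => IsCovering ρ le1 le2 (↑(X ∪ Y) : Set Ordinal) (↑(X ∪ Yt) : Set Ordinal))) ∧
  (∀ X Y : Finset Ordinal, (∀ x ∈ X, x < α) → (∀ y ∈ Y, α ≤ y ∧ y < β) →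
    RClosed ρ (↑(X ∪ Y) : Set Ordinal) →
    ∃ Yt : Finset Ordinal, (∀ y ∈ Yt, y < α) ∧ (∀ x ∈ X, ∀ y ∈ Yt, x < y) ∧
      IsCovering ρ le1 le2 (↑(X ∪ Y) : Set Ordinal) (↑(X ∪ Yt) : Set Ordinal) ∧
      ∀ i : ℕ, i < Y.card → le1 (nth Y i) β → le1 (nth Yt i) α)

/-- `le1`, `le2` satisfy the recursive definitions of `≤₁` and `≤₂` of `R₂^ρ`. -/
def R2System (ρ : Ordinal) (le1 le2 : Ordinal → Ordinal → Prop) : Prop :=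
  (∀ α β, le1 α β ↔ Le1Def ρ le1 le2 α β) ∧
  (∀ α β, le2 α β ↔ Le2Def ρ le1 le2 α β)

/-- Isomorphism of two classes of ordinals as substructures of `R₂^ρ`. -/
def OrdIso (ρ : Ordinal) (le1 le2 : Ordinal → Ordinal → Prop) (A B : Set Ordinal) : Prop :=
  ∃ g : Ordinal → Ordinal, Set.BijOn g A B ∧
    (∀ σ ∈ A, ∀ τ ∈ A, (σ < τ ↔ g σ < g τ)) ∧
    (∀ σ ∈ A, ∀ τ ∈ A, ∀ ξ, ξ < ρ → (fApp ρ ξ σ = τ ↔ fApp ρ ξ (g σ) = g τ)) ∧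
    (∀ σ ∈ A, ∀ τ ∈ A, (le1 σ τ ↔ le1 (g σ) (g τ)) ∧ (le2 σ τ ↔ le2 (g σ) (g τ)))

/-- `κ` is `≤₁`-minimal. -/
def Min1 (le1 : Ordinal → Ordinal → Prop) (κ : Ordinal) : Prop :=
  ∀ ξ < κ, ¬ le1 ξ κ

/-- `(dom, f)` is the increasing enumeration of the class `S` of ordinals:
`dom` is a downward-closed class of indices and `f` restricted to `dom` is the
order isomorphism onto `S`. -/
def Enumerates (S : Set Ordinal) (dom : Ordinal → Prop) (f : Ordinal → Ordinal) : Prop :=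
  (∀ a b : Ordinal, dom a → b < a → dom b) ∧
  (∀ a b : Ordinal, dom b → a < b → f a < f b) ∧
  (∀ a : Ordinal, dom a → f a ∈ S) ∧
  (∀ x ∈ S, ∃ a, dom a ∧ f a = x)

/-- `l` is a limit point of the class `C` of ordinals. -/
def LimPt (C : Set Ordinal) (l : Ordinal) : Prop :=
  l ≠ 0 ∧ ∀ γ < l, ∃ δ ∈ C, γ < δ ∧ δ < l

/-- The class `C` of ordinals is topologically closed. -/
def TopClosed (C : Set Ordinal) : Prop := ∀ l, LimPt C l → l ∈ C

/-- The class `C` of ordinals is an interval. -/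
def IsInterval (C : Set Ordinal) : Prop :=
  ∀ σ τ υ : Ordinal, σ ∈ C → υ ∈ C → σ ≤ τ → τ ≤ υ → τ ∈ C

open Classical in
/-- The closure `J̄_ξ` of the `ξ`-th component of `I_α` with respect to `≤₂`,
given the enumeration `(dom₂, ν)` of the `≤₂`-minimal multiples of `κ_α` in `I_α`. -/
noncomputable def Jbar (le1 : Ordinal → Ordinal → Prop) (κα : Ordinal)
    (dom₂ : Ordinal → Prop) (ν : Ordinal → Ordinal) (ξ : Ordinal) : Set Ordinal :=
  if dom₂ (ξ + 1) then Set.Icc (ν ξ) (ν (ξ + 1))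
  else {δ | le1 κα δ} ∩ Set.Ici (ν ξ)

/-! ### Auxiliary lemmas for `limit_lemmas` -/

namespace LimitLemmas

open Finset in
theorem bound_lt {S : Finset Ordinal} {c : Ordinal} (hS : ∀ s ∈ S, s < c) (hc : 0 < c) :
    ∃ b, b < c ∧ ∀ s ∈ S, s ≤ b := by
  rcases S.eq_empty_or_nonempty with rfl | hne
  · exact ⟨0, hc, by simp⟩
  · exact ⟨S.max' hne, hS _ (S.max'_mem hne), fun s hs => S.le_max' s hs⟩

theorem nth_mem {Y : Finset Ordinal} {i : ℕ} (hi : i < Y.card) : nth Y i ∈ Y := by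
  have hlen : i < (Y.sort (· ≤ ·)).length := by rwa [Finset.length_sort]
  rw [nth, List.getD_eq_getElem _ _ hlen]
  exact (Finset.mem_sort (· ≤ ·)).1 (List.getElem_mem hlen)

section Covers

variable {ρ : Ordinal} {le1 le2 : Ordinal → Ordinal → Prop}

theorem isCovering_id (Z : Set Ordinal) : IsCovering ρ le1 le2 Z Z :=
  ⟨id, ⟨fun _ _ _ _ h => h, fun _ _ _ _ _ _ => Iff.rfl⟩, fun _ _ _ _ => ⟨id, id⟩, Set.image_id Z⟩

theorem isCovering_comp {Z W V : Set Ordinal} (h1 : IsCovering ρ le1 le2 Z W)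
    (h2 : IsCovering ρ le1 le2 W V) : IsCovering ρ le1 le2 Z V := by
  obtain ⟨g, ⟨gm, gf⟩, gp, gi⟩ := h1
  obtain ⟨k, ⟨km, kf⟩, kp, ki⟩ := h2
  have hmem : ∀ a ∈ Z, g a ∈ W := fun a ha => gi ▸ Set.mem_image_of_mem g ha
  refine ⟨k ∘ g, ⟨fun a ha b hb h => km _ (hmem a ha) _ (hmem b hb) (gm a ha b hb h),
    fun a ha b hb ξ hξ => (gf a ha b hb ξ hξ).trans (kf _ (hmem a ha) _ (hmem b hb) ξ hξ)⟩,
    fun a ha b hb => ⟨fun h => (kp _ (hmem a ha) _ (hmem b hb)).1 ((gp a ha b hb).1 h),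
      fun h => (kp _ (hmem a ha) _ (hmem b hb)).2 ((gp a ha b hb).2 h)⟩, ?_⟩
  rw [Set.image_comp, gi, ki]

theorem rclosed_union {S T : Set Ordinal} (hS : RClosed ρ S) (hT : RClosed ρ T) :
    RClosed ρ (S ∪ T) := fun σ ξ hd hξ hm =>
  hm.elim (fun h => Or.inl (hS σ ξ hd hξ h)) (fun h => Or.inr (hT σ ξ hd hξ h))

theorem rclosed_finset_union {Z W : Finset Ordinal} (hZ : RClosed ρ (↑Z : Set Ordinal))
    (hW : RClosed ρ (↑W : Set Ordinal)) : RClosed ρ (↑(Z ∪ W) : Set Ordinal) := by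
  rw [Finset.coe_union]; exact rclosed_union hZ hW

theorem div_mul_add {ζ ξ : Ordinal} (hρ0 : ρ ≠ 0) (hξ : ξ < ρ) : (ρ * ζ + ξ) / ρ = ζ := by
  rw [Ordinal.mul_add_div _ hρ0, Ordinal.div_eq_zero_of_lt hξ, add_zero]

theorem mod_mul_add {ζ ξ : Ordinal} (hξ : ξ < ρ) : (ρ * ζ + ξ) % ρ = ξ := by
  rw [Ordinal.mul_add_mod_self, Ordinal.mod_eq_of_lt hξ]

theorem rclosed_image {Z : Set Ordinal} {h : Ordinal → Ordinal} (hρ0 : ρ ≠ 0)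
    (hZ : RClosed ρ Z) (he : IsEmbed ρ Z h) : RClosed ρ (h '' Z) := by
  rintro σ ξ ⟨ζ, rfl⟩ hξ ⟨τ, hτZ, hτ⟩
  rcases eq_or_ne ξ 0 with rfl | hξ0
  · exact ⟨τ, hτZ, by rw [hτ, add_zero]⟩
  · have hτ₀Z : fApp ρ 0 τ ∈ Z := by
      rw [fApp]
      split_ifs with hmod
      · rw [add_zero]; exact hτZ
      · refine hZ (ρ * (τ / ρ)) (τ % ρ) ⟨_, rfl⟩ (Ordinal.mod_lt τ hρ0) ?_
        rw [Ordinal.div_add_mod]; exact hτZ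
    have hkey := (he.2 τ hτZ (fApp ρ 0 τ) hτ₀Z 0 (pos_iff_ne_zero.2 hρ0)).1 rfl
    refine ⟨fApp ρ 0 τ, hτ₀Z, ?_⟩
    rw [← hkey, hτ]
    simp only [fApp]
    rw [if_neg (by rw [mod_mul_add hξ]; exact hξ0), div_mul_add hρ0 hξ]

theorem cover_rclosed {Z W : Set Ordinal} (hρ0 : ρ ≠ 0) (hZ : RClosed ρ Z)
    (hc : IsCovering ρ le1 le2 Z W) : RClosed ρ W := by
  obtain ⟨h, he, _, hi⟩ := hc; rw [← hi]; exact rclosed_image hρ0 hZ he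

theorem rclosed_pair (hρ0 : ρ ≠ 0) (c : Ordinal) :
    RClosed ρ (↑({ρ * (c / ρ), c} : Finset Ordinal) : Set Ordinal) := by
  rintro σ ξ ⟨ζ, rfl⟩ hξ hm
  have hdd : (ρ * (c / ρ)) / ρ = c / ρ := by
    have := div_mul_add (ρ := ρ) (ζ := c / ρ) (ξ := 0) hρ0 (pos_iff_ne_zero.2 hρ0)
    rwa [add_zero] at this
  simp only [Finset.coe_insert, Finset.coe_singleton, Set.mem_insert_iff,
    Set.mem_singleton_iff] at hm ⊢
  rcases hm with hm | hm
  · left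
    have h1 : ζ = (ρ * (c / ρ)) / ρ := by rw [← hm, div_mul_add hρ0 hξ]
    rw [h1, hdd]
  · left
    have h1 : ζ = c / ρ := by rw [← hm, div_mul_add hρ0 hξ]
    rw [h1]

private theorem antisymmLt : IsAntisymm Ordinal (· < ·) :=
  ⟨fun a b h h' => absurd h (lt_asymm h')⟩

theorem list_map_eq_self {α : Type*} {f : α → α} :
    ∀ {l : List α}, l.map f = l → ∀ x ∈ l, f x = x := by
  intro l
  induction l with
  | nil => intro _ x hx; cases hx
  | cons a l ih =>
    intro h x hx
    simp only [List.map_cons, List.cons.injEq] at h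
    rcases List.mem_cons.1 hx with rfl | hx
    · exact h.1
    · exact ih h.2 x hx

theorem map_sort {Z W : Finset Ordinal} {h : Ordinal → Ordinal}
    (hm : ∀ a ∈ (↑Z : Set Ordinal), ∀ b ∈ (↑Z : Set Ordinal), a < b → h a < h b)
    (hi : h '' ↑Z = ↑W) :
    (Z.sort (· ≤ ·)).map h = W.sort (· ≤ ·) := by
  haveI := antisymmLt
  have hm' : ∀ a ∈ Z, ∀ b ∈ Z, a < b → h a < h b := fun a ha b hb =>
    hm a (Finset.mem_coe.2 ha) b (Finset.mem_coe.2 hb)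
  have hinj : ∀ x ∈ Z.sort (· ≤ ·), ∀ y ∈ Z.sort (· ≤ ·), h x = h y → x = y := by
    intro x hx y hy hxy
    rw [Finset.mem_sort] at hx hy
    rcases lt_trichotomy x y with hlt | he | hlt
    · exact absurd hxy (ne_of_lt (hm' x hx y hy hlt))
    · exact he
    · exact absurd hxy.symm (ne_of_lt (hm' y hy x hx hlt))
  have hnodup : ((Z.sort (· ≤ ·)).map h).Nodup :=
    List.Nodup.map_on hinj (Finset.sort_nodup _ _)
  have hperm : ((Z.sort (· ≤ ·)).map h).Perm (W.sort (· ≤ ·)) := by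
    refine List.perm_of_nodup_nodup_toFinset_eq hnodup (Finset.sort_nodup _ _) ?_
    ext x
    simp only [List.mem_toFinset, List.mem_map, Finset.mem_sort]
    constructor
    · rintro ⟨a, ha, rfl⟩
      have hmem : h a ∈ h '' (↑Z : Set Ordinal) :=
        Set.mem_image_of_mem h (Finset.mem_coe.2 ha)
      rw [hi] at hmem
      exact Finset.mem_coe.1 hmem
    · intro hx
      have hmem : x ∈ h '' (↑Z : Set Ordinal) := by rw [hi]; exact Finset.mem_coe.2 hx
      obtain ⟨a, ha, rfl⟩ := hmem
      exact ⟨a, Finset.mem_coe.1 ha, rfl⟩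
  refine List.Perm.eq_of_pairwise (fun _ _ _ _ h h' => absurd h (lt_asymm h')) (List.pairwise_map.2 ?_) (Finset.sortedLT_sort _).pairwise hperm
  exact List.Pairwise.imp_of_mem
    (fun ha hb hab => hm' _ ((Finset.mem_sort _).1 ha) _ ((Finset.mem_sort _).1 hb) hab)
    (Finset.sortedLT_sort Z).pairwise

theorem sort_union {A B : Finset Ordinal} (hAB : ∀ a ∈ A, ∀ b ∈ B, a < b) :
    (A ∪ B).sort (· ≤ ·) = A.sort (· ≤ ·) ++ B.sort (· ≤ ·) := by
  haveI := antisymmLt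
  have hd : ∀ x ∈ A.sort (· ≤ ·), ∀ y ∈ B.sort (· ≤ ·), x < y := fun x hx y hy =>
    hAB x ((Finset.mem_sort _).1 hx) y ((Finset.mem_sort _).1 hy)
  refine (fun (hp : ((A ∪ B).sort (· ≤ ·)).Perm ((A.sort (· ≤ ·)) ++ B.sort (· ≤ ·))) (hs : ((A.sort (· ≤ ·)) ++ B.sort (· ≤ ·)).Pairwise (· < ·)) => List.Perm.eq_of_pairwise (fun _ _ _ _ h h' => absurd h (lt_asymm h')) (Finset.sortedLT_sort _).pairwise hs hp) ?_ ?_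
  · refine List.perm_of_nodup_nodup_toFinset_eq (Finset.sort_nodup _ _) ?_ ?_
    · exact List.Nodup.append (Finset.sort_nodup _ _) (Finset.sort_nodup _ _)
        (fun x hx hy => absurd (hd x hx x hy) (lt_irrefl x))
    · rw [Finset.sort_toFinset, List.toFinset_append, Finset.sort_toFinset,
        Finset.sort_toFinset]
  · exact List.pairwise_append.2 ⟨(Finset.sortedLT_sort _).pairwise, (Finset.sortedLT_sort _).pairwise, hd⟩

theorem cover_card {Z W : Finset Ordinal}
    (hc : IsCovering ρ le1 le2 (↑Z : Set Ordinal) (↑W : Set Ordinal)) : Z.card = W.card := by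
  obtain ⟨h, ⟨hm, _⟩, _, hi⟩ := hc
  have hms := map_sort hm hi
  have := congrArg List.length hms
  simpa using this

theorem cover_fix {A B C : Finset Ordinal} {h : Ordinal → Ordinal}
    (hm : ∀ a ∈ (↑(A ∪ B) : Set Ordinal), ∀ b ∈ (↑(A ∪ B) : Set Ordinal), a < b → h a < h b)
    (hi : h '' ↑(A ∪ B) = ↑(A ∪ C))
    (hAB : ∀ a ∈ A, ∀ b ∈ B, a < b) (hAC : ∀ a ∈ A, ∀ c ∈ C, a < c) :
    (∀ a ∈ A, h a = a) ∧ h '' (↑B : Set Ordinal) = (↑C : Set Ordinal) := by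
  have h1 := map_sort hm hi
  rw [sort_union hAB, sort_union hAC, List.map_append] at h1
  obtain ⟨hA, hBC⟩ := List.append_inj h1 (by simp)
  constructor
  · exact fun a ha => list_map_eq_self hA a ((Finset.mem_sort _).2 ha)
  · ext x
    simp only [Set.mem_image, Finset.mem_coe]
    constructor
    · rintro ⟨b, hb, rfl⟩
      have : h b ∈ (B.sort (· ≤ ·)).map h := List.mem_map_of_mem (f := h) ((Finset.mem_sort _).2 hb)
      rw [hBC] at this
      exact (Finset.mem_sort _).1 this
    · intro hx
      have : x ∈ (B.sort (· ≤ ·)).map h := by rw [hBC]; exact (Finset.mem_sort _).2 hx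
      obtain ⟨b, hb, rfl⟩ := List.mem_map.1 this
      exact ⟨b, (Finset.mem_sort _).1 hb, rfl⟩

theorem cover_restrict {A B C S : Finset Ordinal} (hS : S ⊆ A)
    (hAB : ∀ a ∈ A, ∀ b ∈ B, a < b) (hAC : ∀ a ∈ A, ∀ c ∈ C, a < c)
    (hc : IsCovering ρ le1 le2 (↑(A ∪ B) : Set Ordinal) (↑(A ∪ C) : Set Ordinal)) :
    IsCovering ρ le1 le2 (↑(S ∪ B) : Set Ordinal) (↑(S ∪ C) : Set Ordinal) := by
  obtain ⟨h, ⟨hm, hf⟩, hp, hi⟩ := hc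
  obtain ⟨hfix, hBC⟩ := cover_fix hm hi hAB hAC
  have hsub : (↑(S ∪ B) : Set Ordinal) ⊆ (↑(A ∪ B) : Set Ordinal) := by
    intro x hx
    simp only [Finset.coe_union, Set.mem_union, Finset.mem_coe] at hx ⊢
    exact hx.imp (fun hh => hS hh) id
  refine ⟨h, ⟨fun a ha b hb => hm a (hsub ha) b (hsub hb),
    fun a ha b hb => hf a (hsub ha) b (hsub hb)⟩,
    fun a ha b hb => hp a (hsub ha) b (hsub hb), ?_⟩
  rw [Finset.coe_union, Set.image_union, Finset.coe_union, hBC]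
  congr 1
  ext x
  simp only [Set.mem_image, Finset.mem_coe]
  constructor
  · rintro ⟨s, hs, rfl⟩; rw [hfix s (hS hs)]; exact hs
  · intro hx; exact ⟨x, hx, hfix x (hS hx)⟩

theorem cover_card_eq {X Y Yt : Finset Ordinal}
    (hXY : ∀ x ∈ X, ∀ y ∈ Y, x < y) (hXYt : ∀ x ∈ X, ∀ y ∈ Yt, x < y)
    (hc : IsCovering ρ le1 le2 (↑(X ∪ Y) : Set Ordinal) (↑(X ∪ Yt) : Set Ordinal)) :
    Y.card = Yt.card := by
  have h1 := cover_card hc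
  have d1 : Disjoint X Y := Finset.disjoint_left.2 fun {a} haX haY =>
    absurd (hXY _ haX _ haY) (lt_irrefl _)
  have d2 : Disjoint X Yt := Finset.disjoint_left.2 fun {a} haX haY =>
    absurd (hXYt _ haX _ haY) (lt_irrefl _)
  rw [Finset.card_union_of_disjoint d1, Finset.card_union_of_disjoint d2] at h1
  exact Nat.add_left_cancel h1

end Covers

section Sys

variable {ρ : Ordinal} {le1 le2 : Ordinal → Ordinal → Prop}

theorem le1_le (hsys : R2System ρ le1 le2) {a b : Ordinal} (h : le1 a b) : a ≤ b :=
  ((hsys.1 a b).mp h).1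

theorem le2_le (hsys : R2System ρ le1 le2) {a b : Ordinal} (h : le2 a b) : a ≤ b :=
  ((hsys.2 a b).mp h).1

theorem le1_refl (hsys : R2System ρ le1 le2) (a : Ordinal) : le1 a a := by
  refine (hsys.1 a a).mpr ⟨le_refl _, fun X Y hX hY hcl => ?_⟩
  have hYe : Y = ∅ := Finset.eq_empty_iff_forall_notMem.2 fun y hy =>
    absurd (hY y hy).2 (not_lt.2 (hY y hy).1)
  refine ⟨∅, fun y hy => absurd hy (Finset.notMem_empty y),
    fun x _ y hy => absurd hy (Finset.notMem_empty y), ?_⟩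
  rw [hYe]
  exact isCovering_id _

theorem le2_refl (hsys : R2System ρ le1 le2) (a : Ordinal) : le2 a a := by
  refine (hsys.2 a a).mpr ⟨le_refl _, fun X Y _ _ _ _ _ hc => hc, fun X Y hX hY hcl => ?_⟩
  have hYe : Y = ∅ := Finset.eq_empty_iff_forall_notMem.2 fun y hy =>
    absurd (hY y hy).2 (not_lt.2 (hY y hy).1)
  refine ⟨∅, fun y hy => absurd hy (Finset.notMem_empty y),
    fun x _ y hy => absurd hy (Finset.notMem_empty y), ?_, ?_⟩
  · rw [hYe]; exact isCovering_id _
  · intro i hi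
    rw [hYe, Finset.card_empty] at hi
    exact absurd hi (Nat.not_lt_zero i)

theorem le1_interval (hsys : R2System ρ le1 le2) {a b c : Ordinal}
    (h : le1 a b) (hac : a ≤ c) (hcb : c ≤ b) : le1 a c := by
  obtain ⟨_, hcond⟩ := (hsys.1 a b).mp h
  exact (hsys.1 a c).mpr ⟨hac, fun X Y hX hY hcl =>
    hcond X Y hX (fun y hy => ⟨(hY y hy).1, lt_of_lt_of_le (hY y hy).2 hcb⟩) hcl⟩

theorem le2_imp_le1 (hsys : R2System ρ le1 le2) {a b : Ordinal} (h : le2 a b) : le1 a b := by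
  obtain ⟨hab, _, hii⟩ := (hsys.2 a b).mp h
  refine (hsys.1 a b).mpr ⟨hab, fun X Y hX hY hcl => ?_⟩
  obtain ⟨Yt, h1, h2, h3, _⟩ := hii X Y hX hY hcl
  exact ⟨Yt, h1, h2, h3⟩

theorem le1_trans (hρ : AddIndec ρ) (hsys : R2System ρ le1 le2) {a b c : Ordinal}
    (h1 : le1 a b) (h2 : le1 b c) : le1 a c := by
  classical
  have hρ0 := hρ.1
  have hab := le1_le hsys h1
  rcases eq_or_lt_of_le hab with rfl | haltb
  · exact h2
  obtain ⟨hbc, hcond2⟩ := (hsys.1 b c).mp h2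
  obtain ⟨_, hcond1⟩ := (hsys.1 a b).mp h1
  refine (hsys.1 a c).mpr ⟨hab.trans hbc, fun X Y hX hY hcl => ?_⟩
  set Y₁ := Y.filter (fun y => y < b) with hY₁
  set Y₂ := Y.filter (fun y => ¬ y < b) with hY₂
  set G : Finset Ordinal := {ρ * (a / ρ), a} with hG
  have hGa : ∀ g ∈ G, g ≤ a := by
    intro g hg
    rw [hG, Finset.mem_insert, Finset.mem_singleton] at hg
    rcases hg with rfl | rfl
    · exact Ordinal.mul_div_le a ρ
    · exact le_rfl
  have haG : a ∈ G := by rw [hG]; exact Finset.mem_insert.2 (Or.inr (Finset.mem_singleton_self a))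
  have hAlt : ∀ t ∈ X ∪ G ∪ Y₁, t < b := by
    intro t ht
    rcases Finset.mem_union.1 ht with ht | ht
    · rcases Finset.mem_union.1 ht with ht | ht
      · exact (hX t ht).trans haltb
      · exact lt_of_le_of_lt (hGa t ht) haltb
    · exact (Finset.mem_filter.1 ht).2
  have hY₂mem : ∀ y ∈ Y₂, b ≤ y ∧ y < c := by
    intro y hy
    obtain ⟨hyY, hyb⟩ := Finset.mem_filter.1 hy
    exact ⟨not_lt.1 hyb, (hY y hyY).2⟩
  have hsplit : (X ∪ G ∪ Y₁) ∪ Y₂ = (X ∪ Y) ∪ G := by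
    ext t
    simp only [hY₁, hY₂, Finset.mem_union, Finset.mem_filter]
    tauto
  have hclG : RClosed ρ (↑((X ∪ G ∪ Y₁) ∪ Y₂) : Set Ordinal) := by
    rw [hsplit]; exact rclosed_finset_union hcl (rclosed_pair hρ0 a)
  obtain ⟨Yv₂, hY2lt, hY2gt, hcov2⟩ := hcond2 (X ∪ G ∪ Y₁) Y₂ hAlt hY₂mem hclG
  have hrestr := cover_restrict (le1 := le1) (le2 := le2)
    (S := X ∪ Y₁) (A := X ∪ G ∪ Y₁) (B := Y₂) (C := Yv₂)
    (by intro t ht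
        rcases Finset.mem_union.1 ht with ht | ht
        · exact Finset.mem_union_left _ (Finset.mem_union_left _ ht)
        · exact Finset.mem_union_right _ ht)
    (fun t ht y hy => lt_of_lt_of_le (hAlt t ht) (hY₂mem y hy).1)
    hY2gt hcov2
  have hXYeq : (X ∪ Y₁) ∪ Y₂ = X ∪ Y := by
    ext t
    simp only [hY₁, hY₂, Finset.mem_union, Finset.mem_filter]
    tauto
  rw [hXYeq] at hrestr
  have hclmid : RClosed ρ (↑((X ∪ Y₁) ∪ Yv₂) : Set Ordinal) := cover_rclosed hρ0 hcl hrestr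
  rw [Finset.union_assoc] at hrestr hclmid
  obtain ⟨Yv₃, h3lt, h3gt, hcov3⟩ := hcond1 X (Y₁ ∪ Yv₂) hX
    (by intro y hy
        rcases Finset.mem_union.1 hy with hy | hy
        · obtain ⟨hyY, hyb⟩ := Finset.mem_filter.1 hy
          exact ⟨(hY y hyY).1, hyb⟩
        · exact ⟨(hY2gt a (Finset.mem_union_left _ (Finset.mem_union_right _ haG)) y hy).le,
            hY2lt y hy⟩)
    hclmid
  exact ⟨Yv₃, h3lt, h3gt, isCovering_comp hrestr hcov3⟩

end Sys

end LimitLemmas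

namespace LimitLemmas

section Main

variable {ρ : Ordinal} {le1 le2 : Ordinal → Ordinal → Prop}

theorem part1_le1 (hsys : R2System ρ le1 le2) {α β : Ordinal} (h0 : 0 < α) (hαβ : α < β)
    (H : ∀ α' < α, ∀ β' < β, ∃ α'' β'' : Ordinal,
      α' < α'' ∧ α'' ≤ α ∧ β' < β'' ∧ β'' ≤ β ∧ le1 α'' β'') :
    le1 α β := by
  refine (hsys.1 α β).mpr ⟨hαβ.le, fun X Y hX hY hcl => ?_⟩
  obtain ⟨α', hα'lt, hα'bd⟩ := bound_lt hX h0
  obtain ⟨βb, hβblt, hβbd⟩ := bound_lt (fun y hy => (hY y hy).2) (h0.trans hαβ)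
  obtain ⟨α'', β'', h1, h2, h3, h4, hle⟩ := H α' hα'lt βb hβblt
  obtain ⟨_, hcond⟩ := (hsys.1 α'' β'').mp hle
  obtain ⟨Yt, ha, hb, hc⟩ := hcond X Y (fun x hx => lt_of_le_of_lt (hα'bd x hx) h1)
    (fun y hy => ⟨h2.trans (hY y hy).1, lt_of_le_of_lt (hβbd y hy) h3⟩) hcl
  exact ⟨Yt, fun y hy => lt_of_lt_of_le (ha y hy) h2, hb, hc⟩

theorem part1_le2 (hρ : AddIndec ρ) (hsys : R2System ρ le1 le2) {α β : Ordinal}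
    (h0 : 0 < α) (hαβ : α < β)
    (H : ∀ α' < α, ∀ β' < β, ∃ α'' β'' : Ordinal,
      α' < α'' ∧ α'' ≤ α ∧ β' < β'' ∧ β'' ≤ β ∧ le2 α'' β'') :
    le2 α β := by
  classical
  have hρ0 := hρ.1
  refine (hsys.2 α β).mpr ⟨hαβ.le, ?_, ?_⟩
  · -- condition (i)
    intro X Y hX hY hXc hYc hXY hcof β' hβ'
    have hbd0 : ∀ t ∈ X ∪ Y, t < α := by
      intro t ht
      rcases Finset.mem_union.1 ht with h | h
      exacts [hX t h, hY t h]
    obtain ⟨α', hα'lt, hα'bd⟩ := bound_lt hbd0 h0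
    obtain ⟨α'', β'', h1, h2, h3, h4, hle⟩ := H α' hα'lt (max β' α) (max_lt hβ' hαβ)
    obtain ⟨_, hcondI, hcondII⟩ := (hsys.2 α'' β'').mp hle
    have hXYcl : RClosed ρ (↑(X ∪ Y) : Set Ordinal) := rclosed_finset_union hXc hYc
    have hcof'' : Cofinally α''
        (fun Yt => IsCovering ρ le1 le2 (↑(X ∪ Y) : Set Ordinal) (↑(X ∪ Yt) : Set Ordinal)) := by
      rcases eq_or_lt_of_le h2 with rfl | hlt
      · exact hcof
      · intro γ hγ
        have hγ'lt : max γ α' < α'' := max_lt hγ h1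
        set γ' := max γ α' with hγ'def
        set G : Finset Ordinal := {ρ * (γ' / ρ), γ'} with hG
        have hGle : ∀ g ∈ G, g ≤ γ' := by
          intro g hg
          rw [hG, Finset.mem_insert, Finset.mem_singleton] at hg
          rcases hg with rfl | rfl
          · exact Ordinal.mul_div_le γ' ρ
          · exact le_rfl
        have hγ'G : γ' ∈ G := by
          rw [hG]; exact Finset.mem_insert.2 (Or.inr (Finset.mem_singleton_self γ'))
        obtain ⟨Yv₁, hYv₁mem, hP₁⟩ := hcof α'' hlt
        have hclXYv₁ : RClosed ρ (↑(X ∪ Yv₁) : Set Ordinal) := cover_rclosed hρ0 hXYcl hP₁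
        have hAle : ∀ t ∈ X ∪ G, t ≤ γ' := by
          intro t ht
          rcases Finset.mem_union.1 ht with ht | ht
          · exact (hα'bd t (Finset.mem_union_left Y ht)).trans (le_max_right γ α')
          · exact hGle t ht
        have hsplit : (X ∪ G) ∪ Yv₁ = (X ∪ Yv₁) ∪ G := by
          ext t; simp only [Finset.mem_union]; tauto
        have hclbig : RClosed ρ (↑((X ∪ G) ∪ Yv₁) : Set Ordinal) := by
          rw [hsplit]; exact rclosed_finset_union hclXYv₁ (rclosed_pair hρ0 γ')
        obtain ⟨Yv₂, hY2lt, hY2gt, hcov2, -⟩ := hcondII (X ∪ G) Yv₁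
          (fun t ht => lt_of_le_of_lt (hAle t ht) hγ'lt)
          (fun y hy => ⟨(hYv₁mem y hy).1.le,
            lt_of_lt_of_le (hYv₁mem y hy).2 ((le_max_right β' α).trans h3.le)⟩)
          hclbig
        have hrestr := cover_restrict (le1 := le1) (le2 := le2)
          (S := X) (A := X ∪ G) (B := Yv₁) (C := Yv₂)
          Finset.subset_union_left
          (fun t ht y hy => lt_of_le_of_lt (lt_of_le_of_lt (hAle t ht) hγ'lt).le
            ((hYv₁mem y hy).1))
          hY2gt hcov2
        exact ⟨Yv₂, fun y hy => ⟨lt_of_le_of_lt (le_max_left γ α') (hY2gt γ'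
          (Finset.mem_union_right X hγ'G) y hy), hY2lt y hy⟩,
          isCovering_comp hP₁ hrestr⟩
    have hcofβ'' := hcondI X Y
      (fun x hx => lt_of_le_of_lt (hα'bd x (Finset.mem_union_left Y hx)) h1)
      (fun y hy => lt_of_le_of_lt (hα'bd y (Finset.mem_union_right X hy)) h1)
      hXc hYc hXY hcof''
    obtain ⟨Yt, hYt, hPYt⟩ := hcofβ'' β' (lt_of_le_of_lt (le_max_left β' α) h3)
    exact ⟨Yt, fun y hy => ⟨(hYt y hy).1, lt_of_lt_of_le (hYt y hy).2 h4⟩, hPYt⟩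
  · -- condition (ii)
    intro X Y hX hY hcl
    obtain ⟨α', hα'lt, hα'bd⟩ := bound_lt hX h0
    obtain ⟨βb, hβblt, hβbd⟩ := bound_lt (fun y hy => (hY y hy).2) (h0.trans hαβ)
    obtain ⟨α'', β'', h1, h2, h3, h4, hle⟩ := H α' hα'lt (max βb α) (max_lt hβblt hαβ)
    obtain ⟨_, -, hcondII⟩ := (hsys.2 α'' β'').mp hle
    have hle1'' : le1 α'' β'' := le2_imp_le1 hsys hle
    obtain ⟨Yt, hYtlt, hYtgt, hcov, hnth⟩ := hcondII X Y
      (fun x hx => lt_of_le_of_lt (hα'bd x hx) h1)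
      (fun y hy => ⟨h2.trans (hY y hy).1,
        lt_of_le_of_lt ((hβbd y hy).trans (le_max_left βb α)) h3⟩)
      hcl
    refine ⟨Yt, fun y hy => lt_of_lt_of_le (hYtlt y hy) h2, hYtgt, hcov, ?_⟩
    intro i hi hYiβ
    have hYi : nth Y i ∈ Y := nth_mem hi
    have hYilt : nth Y i < β'' :=
      lt_of_le_of_lt ((hβbd _ hYi).trans (le_max_left βb α)) h3
    have h5 := hnth i hi (le1_interval hsys hYiβ hYilt.le h4)
    have hcard : Y.card = Yt.card := cover_card_eq
      (fun x hx y hy => lt_of_lt_of_le (hX x hx) (hY y hy).1) hYtgt hcov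
    have hYti : nth Yt i ∈ Yt := nth_mem (hcard ▸ hi)
    have h6 : le1 (nth Yt i) β'' := le1_trans hρ hsys h5 hle1''
    exact le1_interval hsys h6 (lt_of_lt_of_le (hYtlt _ hYti) h2).le
      ((le_max_right βb α).trans h3.le)

theorem part2_top (hsys : R2System ρ le1 le2) (α : Ordinal) :
    TopClosed {β | le1 α β} := by
  rintro l ⟨hl0, hlim⟩
  have hl0' : 0 < l := pos_iff_ne_zero.2 hl0
  refine (hsys.1 α l).mpr ⟨?_, ?_⟩
  · obtain ⟨δ, hδC, _, hδl⟩ := hlim 0 hl0'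
    exact (le1_le hsys hδC).trans hδl.le
  · intro X Y hX hY hcl
    obtain ⟨γ₀, hγ₀, hbd⟩ := bound_lt (fun y hy => (hY y hy).2) hl0'
    obtain ⟨δ, hδC, hγδ, hδl⟩ := hlim γ₀ hγ₀
    obtain ⟨_, hcond⟩ := (hsys.1 α δ).mp hδC
    exact hcond X Y hX (fun y hy => ⟨(hY y hy).1, lt_of_le_of_lt (hbd y hy) hγδ⟩) hcl

theorem part2_int (hsys : R2System ρ le1 le2) (α : Ordinal) :
    IsInterval {β | le1 α β} := fun σ τ υ hσ hυ hστ hτυ =>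
  le1_interval hsys hυ ((le1_le hsys hσ).trans hστ) hτυ

theorem part3 (hsys : R2System ρ le1 le2) (α : Ordinal) :
    TopClosed {β | le2 α β} := by
  rintro l ⟨hl0, hlim⟩
  have hl0' : 0 < l := pos_iff_ne_zero.2 hl0
  refine (hsys.2 α l).mpr ⟨?_, ?_, ?_⟩
  · obtain ⟨δ, hδC, _, hδl⟩ := hlim 0 hl0'
    exact (le2_le hsys hδC).trans hδl.le
  · intro X Y hX hY hXc hYc hXY hcof β' hβ'
    obtain ⟨δ, hδC, hβ'δ, hδl⟩ := hlim β' hβ'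
    obtain ⟨_, hcondI, -⟩ := (hsys.2 α δ).mp hδC
    obtain ⟨Yt, hmem, hP⟩ := hcondI X Y hX hY hXc hYc hXY hcof β' hβ'δ
    exact ⟨Yt, fun y hy => ⟨(hmem y hy).1, (hmem y hy).2.trans hδl⟩, hP⟩
  · intro X Y hX hY hcl
    obtain ⟨γ₀, hγ₀, hbd⟩ := bound_lt (fun y hy => (hY y hy).2) hl0'
    obtain ⟨δ, hδC, hγδ, hδl⟩ := hlim γ₀ hγ₀
    obtain ⟨_, -, hcondII⟩ := (hsys.2 α δ).mp hδC
    obtain ⟨Yt, h1, h2, h3, h4⟩ := hcondII X Y hX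
      (fun y hy => ⟨(hY y hy).1, lt_of_le_of_lt (hbd y hy) hγδ⟩) hcl
    refine ⟨Yt, h1, h2, h3, fun i hi hle => h4 i hi ?_⟩
    exact le1_interval hsys hle (lt_of_le_of_lt (hbd _ (nth_mem hi)) hγδ).le hδl.le

theorem part4_le1 (hsys : R2System ρ le1 le2) (β : Ordinal) :
    TopClosed {a | le1 a β} := by
  rintro l ⟨hl0, hlim⟩
  have hl0' : 0 < l := pos_iff_ne_zero.2 hl0
  have hlβ : l ≤ β := by
    by_contra hcon
    push_neg at hcon
    obtain ⟨δ, hδC, hβδ, -⟩ := hlim β hcon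
    exact absurd (le1_le hsys hδC) (not_le.2 hβδ)
  rcases eq_or_lt_of_le hlβ with rfl | hlt
  · exact le1_refl hsys l
  · refine part1_le1 hsys hl0' hlt ?_
    intro α' hα' β' hβ'
    obtain ⟨δ, hδC, hd1, hd2⟩ := hlim α' hα'
    exact ⟨δ, β, hd1, hd2.le, hβ', le_rfl, hδC⟩

theorem part4_le2 (hρ : AddIndec ρ) (hsys : R2System ρ le1 le2) (β : Ordinal) :
    TopClosed {a | le2 a β} := by
  rintro l ⟨hl0, hlim⟩
  have hl0' : 0 < l := pos_iff_ne_zero.2 hl0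
  have hlβ : l ≤ β := by
    by_contra hcon
    push_neg at hcon
    obtain ⟨δ, hδC, hβδ, -⟩ := hlim β hcon
    exact absurd (le2_le hsys hδC) (not_le.2 hβδ)
  rcases eq_or_lt_of_le hlβ with rfl | hlt
  · exact le2_refl hsys l
  · refine part1_le2 hρ hsys hl0' hlt ?_
    intro α' hα' β' hβ'
    obtain ⟨δ, hδC, hd1, hd2⟩ := hlim α' hα'
    exact ⟨δ, β, hd1, hd2.le, hβ', le_rfl, hδC⟩

end Main

end LimitLemmas
theorem limit_lemmas
    (ρ : Ordinal) (hρ : AddIndec ρ)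
    (le1 le2 : Ordinal → Ordinal → Prop) (hsys : R2System ρ le1 le2)
    :
    (∀ α β : Ordinal, 0 < α → α < β →
      (∀ α' < α, ∀ β' < β, ∃ α'' β'' : Ordinal,
        α' < α'' ∧ α'' ≤ α ∧ β' < β'' ∧ β'' ≤ β ∧ le1 α'' β'') →
      le1 α β) ∧
    (∀ α β : Ordinal, 0 < α → α < β →
      (∀ α' < α, ∀ β' < β, ∃ α'' β'' : Ordinal,
        α' < α'' ∧ α'' ≤ α ∧ β' < β'' ∧ β'' ≤ β ∧ le2 α'' β'') →
      le2 α β) ∧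
    (∀ α : Ordinal, TopClosed {β | le1 α β} ∧ IsInterval {β | le1 α β}) ∧
    (∀ α : Ordinal, TopClosed {β | le2 α β}) ∧
    (∀ β : Ordinal, TopClosed {a | le1 a β} ∧ TopClosed {a | le2 a β}) :=
  ⟨fun _ _ h0 hαβ H => LimitLemmas.part1_le1 hsys h0 hαβ H,
   fun _ _ h0 hαβ H => LimitLemmas.part1_le2 hρ hsys h0 hαβ H,
   fun α => ⟨LimitLemmas.part2_top hsys α, LimitLemmas.part2_int hsys α⟩,
   fun α => LimitLemmas.part3 hsys α,
   fun β => ⟨LimitLemmas.part4_le1 hsys β, LimitLemmas.part4_le2 hρ hsys β⟩⟩
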